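/- π³ = 32·Σ_{n=-∞}^{∞} 1/(1-4n)³, where the sum over all integers n is interpreted as the limit of symmetric partial sums. -/

import Mathlib

open Real Filter

theorem pi_cubed_four :
    ∃ S : ℝ,
      Tendsto (fun N : ℕ => ∑ n ∈ Finset.Icc (-(N : ℤ)) (N : ℤ), 1 / ((1 : ℝ) - 4 * n) ^ 3)
        atTop (nhds S) ∧
      π ^ 3 = 32 * S := by
  set f : ℕ → ℝ := fun n => (1 : ℝ) / (n : ℝ) ^ 3 * Real.sin (π * n / 2) with hf
  set g : ℤ → ℝ := fun n => 1 / ((1 : ℝ) - 4 * n) ^ 3 with hg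
  set e : ℤ → ℕ := fun n => (1 - 4 * n).natAbs with he
  have hinj : Function.Injective e := by
    intro a b hab
    simp only [he] at hab
    rw [Int.natAbs_eq_natAbs_iff] at hab
    omega
  have hzero : ∀ m ∉ Set.range e, f m = 0 := by
    intro m hm
    have hmod : m % 4 ≠ 1 ∧ m % 4 ≠ 3 := by
      constructor
      · intro h
        exact hm ⟨(1 - (m : ℤ)) / 4, by simp only [he]; omega⟩
      · intro h
        exact hm ⟨((m : ℤ) + 1) / 4, by simp only [he]; omega⟩
    -- m is even
    obtain ⟨k, hk⟩ : ∃ k, m = 2 * k := ⟨m / 2, by omega⟩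
    have : Real.sin (π * m / 2) = 0 := by
      rw [hk]
      push_cast
      rw [show π * (2 * (k : ℝ)) / 2 = (k : ℝ) * π by ring]
      exact Real.sin_nat_mul_pi k
    simp [hf, this]
  have hcomp : ∀ n : ℤ, f (e n) = g n := by
    intro n
    rcases le_or_gt n 0 with hn | hn
    · have h1 : ((e n : ℕ) : ℝ) = 1 - 4 * (n : ℝ) := by
        have : ((e n : ℕ) : ℤ) = 1 - 4 * n := by simp only [he]; omega
        push_cast at this ⊢
        exact_mod_cast this
      have hsin : Real.sin (π * (1 - 4 * (n : ℝ)) / 2) = 1 := by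
        rw [show π * (1 - 4 * (n : ℝ)) / 2 = π / 2 + (-n : ℤ) * (2 * π) by push_cast; ring,
          Real.sin_add_int_mul_two_pi, Real.sin_pi_div_two]
      simp only [hf, hg]
      rw [h1, hsin, mul_one]
    · have h1 : ((e n : ℕ) : ℝ) = 4 * (n : ℝ) - 1 := by
        have : ((e n : ℕ) : ℤ) = 4 * n - 1 := by simp only [he]; omega
        push_cast at this ⊢
        exact_mod_cast this
      have hsin : Real.sin (π * (4 * (n : ℝ) - 1) / 2) = -1 := by
        rw [show π * (4 * (n : ℝ) - 1) / 2 = -(π / 2) + (n : ℤ) * (2 * π) by push_cast; ring,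
          Real.sin_add_int_mul_two_pi, Real.sin_neg, Real.sin_pi_div_two]
      simp only [hf, hg]
      rw [h1, hsin, show ((1 : ℝ) - 4 * n) = -(4 * (n : ℝ) - 1) by ring,
        Odd.neg_pow ⟨1, by ring⟩, div_neg]
      ring
  have hsum : HasSum g (π ^ 3 / 32) := by
    have := hasSum_L_function_mod_four_eval_three
    have h2 : HasSum (f ∘ e) (π ^ 3 / 32) := (hinj.hasSum_iff hzero).mpr this
    rwa [show f ∘ e = g from funext hcomp] at h2
  refine ⟨π ^ 3 / 32, ?_, by ring⟩
  have hmono : Monotone (fun N : ℕ => Finset.Icc (-(N : ℤ)) (N : ℤ)) := by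
    intro a b hab
    exact Finset.Icc_subset_Icc (by exact_mod_cast neg_le_neg (Int.ofNat_le.mpr hab))
      (by exact_mod_cast hab)
  have htend : Tendsto (fun N : ℕ => Finset.Icc (-(N : ℤ)) (N : ℤ)) atTop atTop :=
    tendsto_atTop_finset_of_monotone hmono fun x =>
      ⟨x.natAbs, by simp only [Finset.mem_Icc]; omega⟩
  exact hsum.comp htend
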